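/- In Schinzel's example, the point $(1,16)\in\mathbb{Q}^\times\times\mathbb{Q}^\times$ does not lie in the subgroup generated by $(2,1)$, $(3,2)$, $(1,3)$, even though its reduction mod $p$ lies in the reduced subgroup for every prime $p$. -/

import Mathlib

open Subgroup

/-- Key lemma: in any finite cyclic group `G`, for any `g h : G`, the element `(1, g⁴)`
lies in the subgroup of `G × G` generated by `(g,1)`, `(h,g)`, `(1,h)`.  The proof is
by an explicit Bezout computation with a generator of `G`. -/
lemma schinzel_key {G : Type*} [CommGroup G] [Finite G] [IsCyclic G] (g h : G) :
    ((1 : G), g ^ 4) ∈ Subgroup.closure ({(g, 1), (h, g), (1, h)} : Set (G × G)) := by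
  obtain ⟨k, hk⟩ := IsCyclic.exists_generator (α := G)
  obtain ⟨x, hx⟩ := Subgroup.mem_zpowers_iff.mp (hk g)
  obtain ⟨y, hy⟩ := Subgroup.mem_zpowers_iff.mp (hk h)
  set n : ℤ := (orderOf k : ℤ) with hn
  have hnpos : 0 < n := by rw [hn]; exact_mod_cast orderOf_pos k
  have hkn : k ^ n = 1 := by rw [hn, zpow_natCast, pow_orderOf_eq_one]
  set g2 : ℤ := (Int.gcd y n : ℤ) with hg2
  set D : ℤ := (Int.gcd x g2 : ℤ) with hD
  have hg2ne : g2 ≠ 0 := by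
    rw [hg2]
    intro hzero
    have h0 : Int.gcd y n = 0 := by exact_mod_cast hzero
    exact (ne_of_gt hnpos) (Int.gcd_eq_zero_iff.mp h0).2
  have hDne : D ≠ 0 := by
    rw [hD]
    intro hzero
    have h0 : Int.gcd x g2 = 0 := by exact_mod_cast hzero
    exact hg2ne (Int.gcd_eq_zero_iff.mp h0).2
  set s : ℤ := Int.gcdA x g2 with hs
  set q : ℤ := Int.gcdB x g2 with hq
  set t : ℤ := q * Int.gcdA y n with ht
  set w : ℤ := q * Int.gcdB y n with hw
  have hBez : D = s * x + t * y + w * n := by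
    have h1 : D = x * s + g2 * q := Int.gcd_eq_gcd_ab x g2
    have h2 : g2 = y * Int.gcdA y n + n * Int.gcdB y n := Int.gcd_eq_gcd_ab y n
    rw [h1, h2, ht, hw]; ring
  obtain ⟨x', hx'⟩ : D ∣ x := Int.gcd_dvd_left x g2
  obtain ⟨y', hy'⟩ : D ∣ y := dvd_trans (Int.gcd_dvd_right x g2) (Int.gcd_dvd_left y n)
  obtain ⟨n', hn'⟩ : D ∣ n := dvd_trans (Int.gcd_dvd_right x g2) (Int.gcd_dvd_right y n)
  have hBez' : s * x' + t * y' + w * n' = 1 := by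
    apply mul_left_cancel₀ hDne
    rw [mul_one]
    calc D * (s * x' + t * y' + w * n') = s * (D * x') + t * (D * y') + w * (D * n') := by ring
    _ = s * x + t * y + w * n := by rw [← hx', ← hy', ← hn']
    _ = D := hBez.symm
  set a : ℤ := -4 * s * y' with ha
  set b : ℤ := 4 * s * x' with hb
  set c : ℤ := 4 * t * x' with hc
  have habc1 : x * a + y * b = 0 := by rw [hx', hy', ha, hb]; ring
  have habc2 : x * b + y * c = x * 4 + n * (-(4 * x' * w)) := by
    rw [hx', hy', hn', hb, hc]
    linear_combination (4 * D * x') * hBez'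
  have hmem : ((g, (1:G)) : G × G) ^ a * ((h, g) : G × G) ^ b * ((1, h) : G × G) ^ c ∈
      Subgroup.closure ({(g, 1), (h, g), (1, h)} : Set (G × G)) := by
    refine mul_mem (mul_mem (zpow_mem (subset_closure ?_) a) (zpow_mem (subset_closure ?_) b))
      (zpow_mem (subset_closure ?_) c) <;> simp
  have heq : ((g, (1:G)) : G × G) ^ a * ((h, g) : G × G) ^ b * ((1, h) : G × G) ^ c
      = ((1 : G), g ^ 4) := by
    have e1 : g ^ a * h ^ b = 1 := by
      rw [← hx, ← hy, ← zpow_mul, ← zpow_mul, ← zpow_add, habc1, zpow_zero]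
    have e2 : g ^ b * h ^ c = g ^ 4 := by
      have hthis : g ^ b * h ^ c = k ^ (x * b + y * c) := by
        rw [← hx, ← hy, ← zpow_mul, ← zpow_mul, ← zpow_add]
      rw [hthis, habc2, zpow_add, zpow_mul, zpow_mul, hkn, one_zpow, mul_one, hx]
      exact zpow_ofNat g 4
    ext
    · simpa using e1
    · simpa using e2
  rwa [heq] at hmem

/-- The homomorphism `(x,y) ↦ v₂(y) - v₃(x)` on `ℚˣ × ℚˣ`. -/
noncomputable def schinzelVal : ℚˣ × ℚˣ →* Multiplicative ℤ where
  toFun z := Multiplicative.ofAdd (padicValRat 2 (z.2 : ℚ) - padicValRat 3 (z.1 : ℚ))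
  map_one' := by simp
  map_mul' z w := by
    simp only [Prod.fst_mul, Prod.snd_mul, Units.val_mul,
      padicValRat.mul (p := 2) (z.2).ne_zero (w.2).ne_zero,
      padicValRat.mul (p := 3) (z.1).ne_zero (w.1).ne_zero,
      ← ofAdd_add]
    ring_nf

lemma schinzel_v2_2 : padicValRat 2 2 = 1 := by
  have := padicValRat.self (p := 2) one_lt_two; norm_num at this; exact this

lemma schinzel_v3_3 : padicValRat 3 3 = 1 := by
  have := padicValRat.self (p := 3) (by norm_num); norm_num at this; exact this

lemma schinzel_v2_16 : padicValRat 2 16 = 4 := by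
  have h : (16 : ℚ) = (2 : ℚ) ^ 4 := by norm_num
  rw [h, padicValRat.pow (2 : ℚ), schinzel_v2_2]; ring

lemma schinzel_v3_2 : padicValRat 3 2 = 0 := by
  norm_num [padicValRat, padicValInt, padicValNat.eq_zero_of_not_dvd]

lemma schinzel_v2_3 : padicValRat 2 3 = 0 := by
  norm_num [padicValRat, padicValInt, padicValNat.eq_zero_of_not_dvd]

/-- In Schinzel's example, `γ = (1,16) ∈ ℚˣ × ℚˣ` does not lie in the
subgroup `Γ₀` generated by `(2,1)`, `(3,2)`, `(1,3)`, even though for every prime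
`p ∉ {2,3}` its reduction mod `p` lies in the reduced subgroup. -/
theorem schinzel_global_failure :
    ((1 : ℚˣ), (Units.mk0 (16 : ℚ) (by norm_num))) ∉
      Subgroup.closure ({((Units.mk0 (2 : ℚ) (by norm_num)), 1),
          ((Units.mk0 (3 : ℚ) (by norm_num)), (Units.mk0 (2 : ℚ) (by norm_num))),
          (1, (Units.mk0 (3 : ℚ) (by norm_num)))} : Set (ℚˣ × ℚˣ)) ∧
    ∀ (p : ℕ), p.Prime → p ≠ 2 → p ≠ 3 →
      ∀ u2 u3 : (ZMod p)ˣ, (u2 : ZMod p) = 2 → (u3 : ZMod p) = 3 →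
        ((1 : (ZMod p)ˣ), u2 ^ 4) ∈
          Subgroup.closure ({(u2, 1), (u3, u2), (1, u3)} :
            Set ((ZMod p)ˣ × (ZMod p)ˣ)) := by
  constructor
  · intro hmem
    have hle : Subgroup.closure ({((Units.mk0 (2 : ℚ) (by norm_num)), 1),
            ((Units.mk0 (3 : ℚ) (by norm_num)), (Units.mk0 (2 : ℚ) (by norm_num))),
            (1, (Units.mk0 (3 : ℚ) (by norm_num)))} : Set (ℚˣ × ℚˣ)) ≤ schinzelVal.ker := by
      rw [Subgroup.closure_le]
      intro z hz
      simp only [Set.mem_insert_iff, Set.mem_singleton_iff] at hz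
      rcases hz with rfl | rfl | rfl <;>
        simp [MonoidHom.mem_ker, schinzelVal, schinzel_v2_2, schinzel_v3_3, schinzel_v3_2,
          schinzel_v2_3, padicValRat.one]
    have := hle hmem
    simp [MonoidHom.mem_ker, schinzelVal, schinzel_v2_16, padicValRat.one] at this
  · intro p hp _ _ u2 u3 _ _
    haveI := Fact.mk hp
    exact schinzel_key u2 u3
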